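/- (Deterministic violation decomposition.) Let n, m, T ≥ 1 be integers and α ∈ ℝ^m. For each t ∈ [T] and i ∈ [m], let μ_{t,i} ∈ [0,1]^n, ĝ_{t,i} ∈ [0,1]^n, ξ_t ∈ [0,1]^n, q_t ∈ [0,1]^n, q̂_t ∈ [0,1]^n, and g°_i ∈ [0,1]^n. Assume that for all t ∈ [T], i ∈ [m] and all coordinates j ∈ [n]: | ĝ_{t,i,j} − g°_{i,j} | ≤ ξ_{t,j}, and that (ĝ_{t,i} − ξ_t)·q̂_t ≤ α_i. Then max_{i∈[m]} Σ_{t=1}^T [ μ_{t,i}·q_t − α_i ]^+ ≤ Σ_{t=1}^T max_{i∈[m]} ‖μ_{t,i} − g°_i‖₁ + 2·Σ_{t=1}^T ξ_t·q_t + Σ_{t=1}^T ‖q_t − q̂_t‖₁, where [z]^+ = max{z, 0}. -/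
import Mathlib


/-!
Statement 11 (Deterministic violation decomposition).
If the empirical costs are `ξ`-close to the non-corrupted costs and the optimistic
occupancies satisfy the lower-confidence constraints, then
`max_i Σ_t [μ_{t,i}·q_t − α_i]^+
  ≤ Σ_t max_i ‖μ_{t,i} − g°_i‖₁ + 2 Σ_t ξ_t·q_t + Σ_t ‖q_t − q̂_t‖₁`.
-/

open Finset

theorem violation_decomposition
    (n m T : ℕ) (hn : 1 ≤ n) (hm : 1 ≤ m) (hT : 1 ≤ T)
    (α : Fin m → ℝ)
    (μ : Fin T → Fin m → Fin n → ℝ) (hμ : ∀ t i j, μ t i j ∈ Set.Icc (0 : ℝ) 1)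
    (ghat : Fin T → Fin m → Fin n → ℝ) (hghat : ∀ t i j, ghat t i j ∈ Set.Icc (0 : ℝ) 1)
    (ξ : Fin T → Fin n → ℝ) (hξ : ∀ t j, ξ t j ∈ Set.Icc (0 : ℝ) 1)
    (q : Fin T → Fin n → ℝ) (hq : ∀ t j, q t j ∈ Set.Icc (0 : ℝ) 1)
    (qhat : Fin T → Fin n → ℝ) (hqhat : ∀ t j, qhat t j ∈ Set.Icc (0 : ℝ) 1)
    (g0 : Fin m → Fin n → ℝ) (hg0 : ∀ i j, g0 i j ∈ Set.Icc (0 : ℝ) 1)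
    (hconf : ∀ t i j, |ghat t i j - g0 i j| ≤ ξ t j)
    (hfeas : ∀ t i, ∑ j, (ghat t i j - ξ t j) * qhat t j ≤ α i) :
    (⨆ i : Fin m, ∑ t, max ((∑ j, μ t i j * q t j) - α i) 0)
      ≤ (∑ t, ⨆ i : Fin m, ∑ j, |μ t i j - g0 i j|)
        + 2 * ∑ t, ∑ j, ξ t j * q t j
        + ∑ t, ∑ j, |q t j - qhat t j| := by

  have hm' : Nonempty (Fin m) := ⟨⟨0, hm⟩⟩
  apply ciSup_le
  intro i
  rw [mul_sum, ← sum_add_distrib, ← sum_add_distrib]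
  apply Finset.sum_le_sum
  intro t _
  have key : (∑ j, μ t i j * q t j) - α i
      ≤ (∑ j, |μ t i j - g0 i j|) + 2 * ∑ j, ξ t j * q t j
        + ∑ j, |q t j - qhat t j| := by
    have h1 : (∑ j, μ t i j * q t j) - α i
        ≤ (∑ j, μ t i j * q t j) - ∑ j, (ghat t i j - ξ t j) * qhat t j := by
      linarith [hfeas t i]
    refine h1.trans ?_
    rw [← sum_sub_distrib, mul_sum, ← sum_add_distrib, ← sum_add_distrib]
    apply Finset.sum_le_sum
    intro j _
    obtain ⟨hμ0, hμ1⟩ := hμ t i j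
    obtain ⟨hg0', hg1⟩ := hghat t i j
    obtain ⟨hξ0, hξ1⟩ := hξ t j
    obtain ⟨hq0, hq1⟩ := hq t j
    obtain ⟨hqh0, hqh1⟩ := hqhat t j
    obtain ⟨hg00, hg01⟩ := hg0 i j
    have hc := hconf t i j
    rw [abs_le] at hc
    have hab1 : μ t i j - g0 i j ≤ |μ t i j - g0 i j| := le_abs_self _
    have hab2 : |q t j - qhat t j| = |q t j - qhat t j| := rfl
    have habq : q t j - qhat t j ≤ |q t j - qhat t j| := le_abs_self _
    have habq' : -(|q t j - qhat t j|) ≤ q t j - qhat t j := neg_abs_le _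
    have hab0 : (0:ℝ) ≤ |μ t i j - g0 i j| := abs_nonneg _
    nlinarith [abs_nonneg (q t j - qhat t j)]
  have hsup : (∑ j, |μ t i j - g0 i j|) ≤ ⨆ i' : Fin m, ∑ j, |μ t i' j - g0 i' j| :=
    le_ciSup (f := fun i' : Fin m => ∑ j, |μ t i' j - g0 i' j|) (Set.Finite.bddAbove (Set.finite_range _)) i
  rcases le_or_gt ((∑ j, μ t i j * q t j) - α i) 0 with h | h
  · rw [max_eq_right h]
    have h2 : (0:ℝ) ≤ 2 * ∑ j, ξ t j * q t j := by
      apply mul_nonneg (by norm_num)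
      exact Finset.sum_nonneg fun j _ => mul_nonneg (hξ t j).1 (hq t j).1
    have h3 : (0:ℝ) ≤ ∑ j, |q t j - qhat t j| :=
      Finset.sum_nonneg fun j _ => abs_nonneg _
    have h1 : (0:ℝ) ≤ ∑ j, |μ t i j - g0 i j| :=
      Finset.sum_nonneg fun j _ => abs_nonneg _
    linarith
  · rw [max_eq_left h.le]
    linarith
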